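/- arXiv:1212.1065 — 2 statements merged into one kernel-verified Lean document; each statement's English description precedes it below -/
import Mathlib

section
/- The real algebraic subvariety X of (ℙ¹)³ defined by the trilinear equation u u' v'' − v v' v'' + u v' u'' + u' v u'' = 0 (in coordinates ([u:v],[u':v'],[u'':v''])) contains, for each pair of points x, y on the circle S¹ (parametrized as in the stereographic parametrization [u:v] ↦ (u²−v², 2uv)/(u²+v²)), the triple (x, y, (x·y)⁻¹): i.e., if z = x·y in the circle group then the trilinear form vanishes on the corresponding projective parameters of x, y, and z⁻¹. -/
/-- Let `S¹ = {(a,b) ∈ ℝ² : a² + b² = 1}` with multiplication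
`(a,b)·(a',b') = (aa'−bb', ab'+a'b)` and inversion `(a,b)⁻¹ = (a,−b)`. If `x`, `y`, and
`(x·y)⁻¹` are the circle points with projective parameters `[u:v]`, `[u':v']`, `[u'':v'']`
under the parametrization `[u:v] ↦ ((u²−v²)/(u²+v²), 2uv/(u²+v²))`, then the trilinear
form `u u' v'' − v v' v'' + u v' u'' + u' v u''` vanishes, i.e. the triple
`(x, y, (x·y)⁻¹)` lies on the `(1,1,1)`-hypersurface `X ⊂ (ℙ¹)³`. -/
theorem triple_on_trilinear_hypersurface
    (u v u' v' u'' v'' : ℝ)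
    (h : u ^ 2 + v ^ 2 ≠ 0) (h' : u' ^ 2 + v' ^ 2 ≠ 0) (h'' : u'' ^ 2 + v'' ^ 2 ≠ 0)
    (x y z : ℝ × ℝ)
    (hx : x = ((u ^ 2 - v ^ 2) / (u ^ 2 + v ^ 2), 2 * u * v / (u ^ 2 + v ^ 2)))
    (hy : y = ((u' ^ 2 - v' ^ 2) / (u' ^ 2 + v' ^ 2), 2 * u' * v' / (u' ^ 2 + v' ^ 2)))
    (hz : z = (x.1 * y.1 - x.2 * y.2, x.1 * y.2 + y.1 * x.2))
    (hzinv : (z.1, -z.2)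
      = ((u'' ^ 2 - v'' ^ 2) / (u'' ^ 2 + v'' ^ 2), 2 * u'' * v'' / (u'' ^ 2 + v'' ^ 2))) :
    u * u' * v'' - v * v' * v'' + u * v' * u'' + u' * v * u'' = 0 := by
  subst hx hy hz
  simp only [Prod.mk.injEq] at hzinv
  obtain ⟨h1, h2⟩ := hzinv
  field_simp at h1 h2
  have hA : (0:ℝ) < u ^ 2 + v ^ 2 := lt_of_le_of_ne (by positivity) (Ne.symm h)
  have hB : (0:ℝ) < u' ^ 2 + v' ^ 2 := lt_of_le_of_ne (by positivity) (Ne.symm h')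
  have hC : (0:ℝ) < u'' ^ 2 + v'' ^ 2 := lt_of_le_of_ne (by positivity) (Ne.symm h'')
  set P : ℝ := u * u' - v * v' with hP
  set Q : ℝ := u * v' + u' * v with hQ
  set T : ℝ := P * v'' + Q * u'' with hT
  set S : ℝ := P * u'' - Q * v'' with hS
  have hABpos : (0:ℝ) < (u ^ 2 + v ^ 2) * (u' ^ 2 + v' ^ 2) := mul_pos hA hB
  have hAB : (u ^ 2 + v ^ 2) * (u' ^ 2 + v' ^ 2) ≠ 0 := ne_of_gt hABpos
  have e2 : (-(2 * P * Q)) * (u'' ^ 2 + v'' ^ 2) =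
      2 * u'' * v'' * ((u ^ 2 + v ^ 2) * (u' ^ 2 + v' ^ 2)) := by
    apply mul_right_cancel₀ hAB
    linear_combination (2 * ((u ^ 2 + v ^ 2) * (u' ^ 2 + v' ^ 2))) * h2
  have e1 : (P ^ 2 - Q ^ 2) * (u'' ^ 2 + v'' ^ 2) =
      (u'' ^ 2 - v'' ^ 2) * ((u ^ 2 + v ^ 2) * (u' ^ 2 + v' ^ 2)) := by
    linear_combination h1
  have hTS : T * S = 0 := by
    apply mul_left_cancel₀ hAB
    linear_combination (-(P * Q)) * e1 - ((P ^ 2 - Q ^ 2) / 2) * e2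
  have hdiff : (S ^ 2 - T ^ 2) * ((u ^ 2 + v ^ 2) * (u' ^ 2 + v' ^ 2)) =
      (P ^ 2 + Q ^ 2) ^ 2 * (u'' ^ 2 + v'' ^ 2) := by
    linear_combination (-(P ^ 2 - Q ^ 2)) * e1 + (2 * P * Q) * e2
  have key : T ^ 4 * ((u ^ 2 + v ^ 2) * (u' ^ 2 + v' ^ 2)) =
      -(T ^ 2 * (P ^ 2 + Q ^ 2) ^ 2 * (u'' ^ 2 + v'' ^ 2)) := by
    linear_combination (-(T ^ 2)) * hdiff +
      ((u ^ 2 + v ^ 2) * (u' ^ 2 + v' ^ 2) * (S * T)) * hTS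
  have hnn : (0:ℝ) ≤ T ^ 2 * (P ^ 2 + Q ^ 2) ^ 2 * (u'' ^ 2 + v'' ^ 2) := by positivity
  have h4 : T ^ 4 ≤ 0 := by
    have : T ^ 4 * ((u ^ 2 + v ^ 2) * (u' ^ 2 + v' ^ 2)) ≤
        0 * ((u ^ 2 + v ^ 2) * (u' ^ 2 + v' ^ 2)) := by
      rw [zero_mul, key]; linarith
    exact le_of_mul_le_mul_right this hABpos
  have hT4 : T ^ 4 = 0 := le_antisymm h4 (by positivity)
  have hT0 : T = 0 := by
    exact pow_eq_zero_iff (n := 4) (by norm_num) |>.mp hT4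
  linear_combination hT0
end

section
/- The map φ([x]) = ([x − τ(x)𝟙], [x⁻¹ − τ(x⁻¹)𝟙]) is S₃-equivariant: for every σ ∈ S₃, φ(σ·[x]) = σ·φ([x]), where S₃ acts on classes [x] by σ[x] = [σ(x)^{sign σ}] and on ℙ(𝔱)×ℙ(𝔱) by σ([a],[b]) = ([σa],[σb]) if σ is even and ([σb],[σa]) if σ is odd. -/
/-- `cayleyVec x = x − τ(x)·𝟙` where `τ(x) = (x₁ + x₂ + x₃)/3`. -/
def cayleyVec (K : Type*) [Field K] (x : Fin 3 → Kˣ) : Fin 3 → K :=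
  fun i => (x i : K) - ((x 0 : K) + (x 1 : K) + (x 2 : K)) / 3

lemma sum3_perm {K : Type*} [Field K] (f : Fin 3 → K) (e : Equiv.Perm (Fin 3)) :
    f (e 0) + f (e 1) + f (e 2) = f 0 + f 1 + f 2 := by
  have := Equiv.sum_comp e f
  simpa [Fin.sum_univ_three, add_assoc] using this

lemma cayleyVec_perm {K : Type*} [Field K] (x : Fin 3 → Kˣ) (e : Equiv.Perm (Fin 3)) :
    cayleyVec K (fun i => x (e i)) = fun i => cayleyVec K x (e i) := by
  funext i
  simp only [cayleyVec]
  rw [sum3_perm (fun j => (x j : K)) e]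

/-- The map `φ([x]) = ([x − τ(x)𝟙], [x⁻¹ − τ(x⁻¹)𝟙])` is `S₃`-equivariant, where `S₃`
acts on classes by `σ[x] = [σ(x)^{sign σ}]` and on `ℙ(𝔱) × ℙ(𝔱)` by
`σ([a],[b]) = ([σa],[σb])` if `σ` is even and `([σb],[σa])` if `σ` is odd. (The
equivariance holds on the nose at the level of representing vectors.) -/
theorem cayley_rational_map_equivariant (K : Type*) [Field K] (h3 : (3 : K) ≠ 0)
    (σ : Equiv.Perm (Fin 3)) (x : Fin 3 → Kˣ)
    (y : Fin 3 → Kˣ)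
    (hy : y = fun i => x (σ⁻¹ i) ^ ((Equiv.Perm.sign σ : ℤˣ) : ℤ)) :
    (cayleyVec K y, cayleyVec K y⁻¹) =
      if Equiv.Perm.sign σ = 1 then
        ((fun i => cayleyVec K x (σ⁻¹ i)), (fun i => cayleyVec K x⁻¹ (σ⁻¹ i)))
      else
        ((fun i => cayleyVec K x⁻¹ (σ⁻¹ i)), (fun i => cayleyVec K x (σ⁻¹ i))) := by
  rcases Int.units_eq_one_or (Equiv.Perm.sign σ) with hs | hs
  · rw [hs, if_pos rfl]
    have hy' : y = fun i => x (σ⁻¹ i) := by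
      simpa [hs] using hy
    have hyi : y⁻¹ = fun i => x⁻¹ (σ⁻¹ i) := by
      funext i; simp [hy', Pi.inv_apply]
    rw [hyi, hy']
    exact Prod.ext (cayleyVec_perm x σ⁻¹) (cayleyVec_perm x⁻¹ σ⁻¹)
  · rw [hs, if_neg (by decide)]
    have hy' : y = fun i => x⁻¹ (σ⁻¹ i) := by
      funext i; simp [hy, hs, Pi.inv_apply]
    have hyi : y⁻¹ = fun i => x (σ⁻¹ i) := by
      funext i; simp [hy', Pi.inv_apply]
    rw [hyi, hy']
    exact Prod.ext (cayleyVec_perm x⁻¹ σ⁻¹) (cayleyVec_perm x σ⁻¹)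
end
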